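/- Let F be a field of characteristic 2, k ≥ 2r, and J(k,r) = I_k + N where N is the k×k matrix whose only nonzero block is the identity I_r in the lower-left corner (i.e. N_{k-r+i, i} = 1 for 1 ≤ i ≤ r). Then a k×k matrix M commutes with J(k,r) if and only if, in the block decomposition k = r + (k-2r) + r, M has the form [[B1, 0, 0],[B2, B3, 0],[B4, B5, B1]] (same r×r block B1 in the top-left and bottom-right corners). -/

import Mathlib

theorem stmt_10 {F : Type*} [Field F] (hF : ringChar F = 2) {k r : ℕ} (hkr : 2 * r ≤ k)
    (M : Matrix (Fin r ⊕ (Fin (k - 2 * r) ⊕ Fin r)) (Fin r ⊕ (Fin (k - 2 * r) ⊕ Fin r)) F) :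
    (M * (1 + Matrix.of (fun i j : Fin r ⊕ (Fin (k - 2 * r) ⊕ Fin r) =>
        match i, j with
        | Sum.inr (Sum.inr a), Sum.inl b => if a = b then (1 : F) else 0
        | _, _ => 0)) =
      (1 + Matrix.of (fun i j : Fin r ⊕ (Fin (k - 2 * r) ⊕ Fin r) =>
        match i, j with
        | Sum.inr (Sum.inr a), Sum.inl b => if a = b then (1 : F) else 0
        | _, _ => 0)) * M) ↔
    ∃ (B1 : Matrix (Fin r) (Fin r) F) (B2 : Matrix (Fin (k - 2 * r)) (Fin r) F)
      (B3 : Matrix (Fin (k - 2 * r)) (Fin (k - 2 * r)) F) (B4 : Matrix (Fin r) (Fin r) F)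
      (B5 : Matrix (Fin r) (Fin (k - 2 * r)) F),
        M = Matrix.fromBlocks B1 0 (Matrix.fromRows B2 B4) (Matrix.fromBlocks B3 0 B5 B1) := by
  set N : Matrix (Fin r ⊕ (Fin (k - 2 * r) ⊕ Fin r)) (Fin r ⊕ (Fin (k - 2 * r) ⊕ Fin r)) F :=
    Matrix.of (fun i j : Fin r ⊕ (Fin (k - 2 * r) ⊕ Fin r) =>
        match i, j with
        | Sum.inr (Sum.inr a), Sum.inl b => if a = b then (1 : F) else 0
        | _, _ => 0) with hN
  have hcomm : (M * (1 + N) = (1 + N) * M) ↔ M * N = N * M := by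
    rw [mul_add, add_mul, mul_one, one_mul, add_right_inj]
  rw [hcomm]
  have hMN : ∀ i j, (M * N) i j = ∑ x, M i x * N x j := fun i j => Matrix.mul_apply
  have hNM : ∀ i j, (N * M) i j = ∑ x, N i x * M x j := fun i j => Matrix.mul_apply
  constructor
  · intro h
    have h' : ∀ i j, (M * N) i j = (N * M) i j := fun i j => by rw [h]
    refine ⟨Matrix.of fun a b => M (.inl a) (.inl b), Matrix.of fun a b => M (.inr (.inl a)) (.inl b),
      Matrix.of fun a b => M (.inr (.inl a)) (.inr (.inl b)), Matrix.of fun a b => M (.inr (.inr a)) (.inl b),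
      Matrix.of fun a b => M (.inr (.inr a)) (.inr (.inl b)), ?_⟩
    ext i j
    rcases i with a | a | a <;> rcases j with b | b | b <;>
      simp only [Matrix.fromBlocks_apply₁₁, Matrix.fromBlocks_apply₁₂,
        Matrix.fromBlocks_apply₂₁, Matrix.fromBlocks_apply₂₂, Matrix.fromRows_apply_inl,
        Matrix.fromRows_apply_inr, Matrix.zero_apply, Matrix.of_apply]
    · -- M (inl a) (inr (inl b)) = 0
      have := h' (.inr (.inr a)) (.inr (.inl b))
      rw [hMN, hNM] at this
      simpa [hN, Fintype.sum_sum_type, Matrix.of_apply] using this.symm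
    · -- M (inl a) (inr (inr b)) = 0
      have := h' (.inl a) (.inl b)
      rw [hMN, hNM] at this
      simpa [hN, Fintype.sum_sum_type, Matrix.of_apply, mul_ite] using this
    · -- M (inr (inl a)) (inr (inr b)) = 0
      have := h' (.inr (.inl a)) (.inl b)
      rw [hMN, hNM] at this
      simpa [hN, Fintype.sum_sum_type, Matrix.of_apply, mul_ite] using this
    · -- M (inr (inr a)) (inr (inr b)) = M (inl a) (inl b)
      have := h' (.inr (.inr a)) (.inl b)
      rw [hMN, hNM] at this
      simpa [hN, Fintype.sum_sum_type, Matrix.of_apply, mul_ite] using this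
  · rintro ⟨B1, B2, B3, B4, B5, rfl⟩
    ext i j
    rw [hMN, hNM]
    rcases i with a | a | a <;> rcases j with b | b | b <;>
      simp [hN, Fintype.sum_sum_type, Matrix.of_apply, mul_ite, Finset.sum_ite_eq,
        Finset.sum_ite_eq']
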